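/- Assuming the Brun–Titchmarsh inequality π(x; m, 1) ≤ 2x/(φ(m) log(x/m)) for m < x, the quantity M₁ = Σ log ℓ over prime powers ℓ^k with k ≥ 2 and x^c < ℓ^k ≤ x^{1-d}(log x)^r, weighted by π(x; ℓ^k, 1), satisfies M₁ ≪ x^{1-c+(1-d)/2}/(log x)^{1 - r/2}, for fixed 0 < c ≤ 1/2, 0 < d < 1 - c, r ∈ [0,1). -/

import Mathlib

open scoped Classical

/-- `π(x; m, 1)`: the number of primes `q ≤ x` with `q ≡ 1 (mod m)`. -/
noncomputable def piProg (x : ℝ) (m : ℕ) : ℕ :=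
  ((Finset.Icc 1 ⌊x⌋₊).filter (fun q => q.Prime ∧ q % m = 1)).card

open Finset Real Filter in
private lemma stmt15_term (c d r x : ℝ) (ℓ j : ℕ) (hd0 : 0 < d) (hr1 : r < 1)
    (hx2 : 2 ≤ x) (hl1 : 1 ≤ Real.log x) (hld : Real.log x ≤ x ^ (d/2))
    (hℓp : ℓ.Prime) (hℓx : ℓ ≤ ⌊x⌋₊) (hj2 : 2 ≤ j)
    (hBT : ∀ m : ℕ, 1 ≤ m → (m : ℝ) < x →
        (piProg x m : ℝ) ≤ 2 * x / ((m.totient : ℝ) * Real.log (x / m)))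
    (hlow : x ^ c < ((ℓ : ℝ)) ^ j) (hhigh : ((ℓ : ℝ)) ^ j ≤ x ^ (1 - d) * (Real.log x) ^ r) :
    Real.log ℓ * (piProg x (ℓ ^ j) : ℝ) ≤ (8 / d * (x / x ^ (c/2))) / ℓ := by
  have hx0 : (0:ℝ) < x := by linarith
  have hx1 : (1:ℝ) < x := by linarith
  have hl0 : (0:ℝ) < Real.log x := by linarith
  have hℓ2 : 2 ≤ ℓ := hℓp.two_le
  have hℓ0 : (0:ℝ) < (ℓ:ℝ) := by exact_mod_cast Nat.pos_of_ne_zero (by omega)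
  have hℓ2' : (2:ℝ) ≤ (ℓ:ℝ) := by exact_mod_cast hℓ2
  have hm0 : (0:ℝ) < (ℓ:ℝ)^j := by positivity
  have hcast : ((ℓ ^ j : ℕ) : ℝ) = (ℓ:ℝ)^j := by push_cast; ring
  have h1 : (Real.log x) ^ r ≤ x ^ (d/2) := by
    calc (Real.log x) ^ r ≤ (Real.log x) ^ (1:ℝ) :=
          Real.rpow_le_rpow_of_exponent_le hl1 (by linarith)
    _ = Real.log x := Real.rpow_one _
    _ ≤ x ^ (d/2) := hld
  have hmle : (ℓ:ℝ)^j ≤ x ^ (1 - d/2) := by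
    calc (ℓ:ℝ)^j ≤ x ^ (1-d) * x ^ (d/2) :=
          hhigh.trans (mul_le_mul_of_nonneg_left h1 (Real.rpow_nonneg hx0.le _))
    _ = x ^ (1 - d/2) := by rw [← Real.rpow_add hx0]; congr 1; ring
  have hmx : (ℓ:ℝ)^j < x := by
    calc (ℓ:ℝ)^j ≤ x ^ (1 - d/2) := hmle
    _ < x ^ (1:ℝ) := Real.rpow_lt_rpow_of_exponent_lt hx1 (by linarith)
    _ = x := Real.rpow_one x
  have hbt := hBT (ℓ ^ j) (Nat.one_le_pow _ _ (by omega)) (by rw [hcast]; exact hmx)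
  rw [hcast] at hbt
  have htot : (ℓ:ℝ)^j / 2 ≤ (((ℓ ^ j).totient : ℕ) : ℝ) := by
    rw [Nat.totient_prime_pow hℓp (by omega : 0 < j)]
    push_cast [Nat.cast_sub (by omega : 1 ≤ ℓ)]
    have h2 : (ℓ:ℝ)^(j-1) * ((ℓ:ℝ)/2) ≤ (ℓ:ℝ)^(j-1) * ((ℓ:ℝ) - 1) := by
      apply mul_le_mul_of_nonneg_left (by linarith) (by positivity)
    calc (ℓ:ℝ)^j / 2 = (ℓ:ℝ)^(j-1) * ((ℓ:ℝ)/2) := by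
          rw [mul_div_assoc']
          congr 1
          rw [← pow_succ]
          congr 1
          omega
    _ ≤ _ := h2
  have hlx : d/2 * Real.log x ≤ Real.log (x / (ℓ:ℝ)^j) := by
    have hdiv : x ^ (d/2) ≤ x / (ℓ:ℝ)^j := by
      rw [le_div_iff₀ hm0]
      calc x ^ (d/2) * (ℓ:ℝ)^j ≤ x ^ (d/2) * x ^ (1 - d/2) :=
            mul_le_mul_of_nonneg_left hmle (Real.rpow_nonneg hx0.le _)
      _ = x := by rw [← Real.rpow_add hx0]; norm_num
    calc d/2 * Real.log x = Real.log (x ^ (d/2)) := (Real.log_rpow hx0 _).symm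
    _ ≤ Real.log (x / (ℓ:ℝ)^j) := Real.log_le_log (Real.rpow_pos_of_pos hx0 _) hdiv
  have hden0 : (0:ℝ) < (ℓ:ℝ)^j / 2 * (d/2 * Real.log x) := by positivity
  have hmπ : (piProg x (ℓ ^ j) : ℝ) ≤ 2 * x / ((ℓ:ℝ)^j / 2 * (d/2 * Real.log x)) := by
    refine hbt.trans ?_
    rw [div_le_div_iff_of_pos_left (by linarith) ?_ hden0]
    · exact mul_le_mul htot hlx (by positivity) (le_trans (by positivity) htot)
    · exact lt_of_lt_of_le hden0 (mul_le_mul htot hlx (by positivity) (le_trans (by positivity) htot))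
  have hsq : x ^ (c/2) * (ℓ:ℝ) ≤ (ℓ:ℝ)^j := by
    have hxc : x ^ (c/2) * x ^ (c/2) = x ^ c := by rw [← Real.rpow_add hx0]; norm_num
    have hℓsq : (ℓ:ℝ)^2 ≤ (ℓ:ℝ)^j := pow_le_pow_right₀ (by linarith) hj2
    have h2 : (x ^ (c/2) * (ℓ:ℝ))^2 ≤ ((ℓ:ℝ)^j)^2 := by
      calc (x ^ (c/2) * (ℓ:ℝ))^2 = (x ^ (c/2) * x ^ (c/2)) * (ℓ:ℝ)^2 := by ring
      _ = x ^ c * (ℓ:ℝ)^2 := by rw [hxc]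
      _ ≤ (ℓ:ℝ)^j * (ℓ:ℝ)^j := mul_le_mul hlow.le hℓsq (by positivity) (by positivity)
      _ = ((ℓ:ℝ)^j)^2 := by ring
    exact (pow_le_pow_iff_left₀ (by positivity) (by positivity) two_ne_zero).mp h2
  have hlogℓ : Real.log ℓ ≤ Real.log x :=
    Real.log_le_log hℓ0 (le_trans (by exact_mod_cast hℓx) (Nat.floor_le hx0.le))
  calc Real.log ℓ * (piProg x (ℓ ^ j) : ℝ)
      ≤ Real.log x * (2 * x / ((ℓ:ℝ)^j / 2 * (d/2 * Real.log x))) :=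
        mul_le_mul hlogℓ hmπ (Nat.cast_nonneg _) hl0.le
  _ = 8 * x / (d * (ℓ:ℝ)^j) := by
        field_simp
        ring
  _ ≤ 8 * x / (d * (x ^ (c/2) * (ℓ:ℝ))) := by
        apply div_le_div_of_nonneg_left (by linarith) (by positivity)
        exact mul_le_mul_of_nonneg_left hsq hd0.le
  _ = (8 / d * (x / x ^ (c/2))) / ℓ := by
        field_simp

open Finset Real Filter in
private lemma stmt15_harm (N : ℕ) : ∑ n ∈ Finset.Icc 1 N, (1/(n:ℝ)) ≤ 1 + Real.log N := by
  have h1 : ∑ n ∈ Finset.Icc 1 N, (1/(n:ℝ)) = ((harmonic N : ℚ) : ℝ) := by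
    rw [harmonic]
    push_cast
    rw [← Finset.Ico_add_one_right_eq_Icc, Finset.sum_Ico_eq_sum_range]
    simp [one_div, add_comm]
  rw [h1]
  exact harmonic_le_one_add_log N

open Finset Real Filter in
theorem stmt15 (c d r : ℝ) (hc0 : 0 < c) (hc : c ≤ 1 / 2) (hd0 : 0 < d)
    (hd : d < 1 - c) (hr0 : 0 ≤ r) (hr1 : r < 1) :
    ∃ C > 0, ∃ x₀ : ℝ, ∀ x : ℝ, x₀ ≤ x →
      (∀ m : ℕ, 1 ≤ m → (m : ℝ) < x →
          (piProg x m : ℝ) ≤ 2 * x / ((m.totient : ℝ) * Real.log (x / m))) →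
      (∑ ℓ ∈ (Finset.Icc 1 ⌊x⌋₊).filter Nat.Prime,
          ∑ j ∈ Finset.Icc 2 ⌈2 * Real.logb 2 x⌉₊,
            if x ^ c < ((ℓ : ℝ)) ^ j ∧ ((ℓ : ℝ)) ^ j ≤ x ^ (1 - d) * (Real.log x) ^ r
            then Real.log ℓ * (piProg x (ℓ ^ j) : ℝ) else 0)
        ≤ C * x ^ (1 - c + (1 - d) / 2) / (Real.log x) ^ (1 - r / 2) := by
  have hlogev : ∀ a : ℝ, 0 < a → ∀ᶠ x : ℝ in atTop, Real.log x ≤ x ^ a := by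
    intro a ha
    have h := (isLittleO_log_rpow_atTop ha).bound one_pos
    filter_upwards [h, eventually_ge_atTop (1:ℝ)] with x hb hx1
    rw [Real.norm_eq_abs, Real.norm_eq_abs, one_mul] at hb
    calc Real.log x ≤ |Real.log x| := le_abs_self _
    _ ≤ |x ^ a| := hb
    _ = x ^ a := abs_of_nonneg (Real.rpow_nonneg (by linarith) _)
  have hev : ∀ᶠ x : ℝ in atTop, 2 ≤ x ∧ 1 ≤ Real.log x ∧ Real.log x ≤ x ^ (d/2) ∧
      Real.log x ≤ x ^ ((1 - c - d)/2/3) := by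
    filter_upwards [eventually_ge_atTop (2:ℝ),
      Real.tendsto_log_atTop.eventually_ge_atTop 1,
      hlogev (d/2) (by linarith), hlogev ((1 - c - d)/2/3) (by linarith)] with x h1 h2 h3 h4
    exact ⟨h1, h2, h3, h4⟩
  obtain ⟨x₀, hx₀⟩ := eventually_atTop.mp hev
  refine ⟨64 / d, by positivity, x₀, ?_⟩
  intro x hx hBT
  obtain ⟨hx2, hl1, hld, hle⟩ := hx₀ x hx
  have hx0 : (0:ℝ) < x := by linarith
  have hl0 : (0:ℝ) < Real.log x := by linarith
  set J := ⌈2 * Real.logb 2 x⌉₊ with hJ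
  set K := 8 / d * (x / x ^ (c/2)) with hK
  have hK0 : 0 ≤ K := by positivity
  -- J bound
  have hJle : (J : ℝ) ≤ 4 * Real.log x := by
    have hlb : 0 ≤ 2 * Real.logb 2 x := by
      have : 0 ≤ Real.logb 2 x := Real.logb_nonneg (by norm_num) (by linarith)
      linarith
    have h := Nat.ceil_lt_add_one hlb
    have hlog2 : (0.6931471803:ℝ) < Real.log 2 := Real.log_two_gt_d9
    have h3 : 2 * Real.logb 2 x ≤ 3 * Real.log x := by
      rw [Real.logb, ← mul_div_assoc, div_le_iff₀ (by linarith : (0:ℝ) < Real.log 2)]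
      nlinarith [hl1]
    rw [hJ]
    linarith [h.le]
  -- termwise bound
  have hterm : ∀ ℓ ∈ (Finset.Icc 1 ⌊x⌋₊).filter Nat.Prime, ∀ j ∈ Finset.Icc 2 J,
      (if x ^ c < ((ℓ : ℝ)) ^ j ∧ ((ℓ : ℝ)) ^ j ≤ x ^ (1 - d) * (Real.log x) ^ r
        then Real.log ℓ * (piProg x (ℓ ^ j) : ℝ) else 0) ≤ K / ℓ := by
    intro ℓ hℓ j hj
    simp only [Finset.mem_filter, Finset.mem_Icc] at hℓ hj
    have hℓc : (0:ℝ) ≤ (ℓ:ℝ) := Nat.cast_nonneg _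
    split_ifs with hcond
    · exact stmt15_term c d r x ℓ j hd0 hr1 hx2 hl1 hld hℓ.2 hℓ.1.2 hj.1 hBT hcond.1 hcond.2
    · exact div_nonneg hK0 hℓc
  -- sum it up
  have hsum : (∑ ℓ ∈ (Finset.Icc 1 ⌊x⌋₊).filter Nat.Prime,
      ∑ j ∈ Finset.Icc 2 J,
        if x ^ c < ((ℓ : ℝ)) ^ j ∧ ((ℓ : ℝ)) ^ j ≤ x ^ (1 - d) * (Real.log x) ^ r
        then Real.log ℓ * (piProg x (ℓ ^ j) : ℝ) else 0)
      ≤ 64 / d * (x / x ^ (c/2)) * (Real.log x)^2 := by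
    calc _ ≤ ∑ ℓ ∈ (Finset.Icc 1 ⌊x⌋₊).filter Nat.Prime, ∑ _j ∈ Finset.Icc 2 J, K / (ℓ:ℝ) :=
          Finset.sum_le_sum (fun ℓ hℓ => Finset.sum_le_sum (hterm ℓ hℓ))
    _ = ∑ ℓ ∈ (Finset.Icc 1 ⌊x⌋₊).filter Nat.Prime, ((J - 1 : ℕ) : ℝ) * (K / (ℓ:ℝ)) := by
          refine Finset.sum_congr rfl (fun ℓ _ => ?_)
          rw [Finset.sum_const, Nat.card_Icc, nsmul_eq_mul]
          have h12 : J + 1 - 2 = J - 1 := by omega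
          rw [h12]
    _ ≤ ∑ ℓ ∈ (Finset.Icc 1 ⌊x⌋₊).filter Nat.Prime, (J:ℝ) * (K / (ℓ:ℝ)) := by
          refine Finset.sum_le_sum (fun ℓ _ => ?_)
          have h1 : ((J - 1 : ℕ) : ℝ) ≤ (J : ℝ) := by exact_mod_cast Nat.sub_le J 1
          exact mul_le_mul_of_nonneg_right h1 (div_nonneg hK0 (Nat.cast_nonneg _))
    _ = (J:ℝ) * K * ∑ ℓ ∈ (Finset.Icc 1 ⌊x⌋₊).filter Nat.Prime, (1 / (ℓ:ℝ)) := by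
          rw [Finset.mul_sum]
          refine Finset.sum_congr rfl (fun ℓ _ => ?_)
          ring
    _ ≤ (J:ℝ) * K * ∑ n ∈ Finset.Icc 1 ⌊x⌋₊, (1 / (n:ℝ)) := by
          refine mul_le_mul_of_nonneg_left ?_ (by positivity)
          refine Finset.sum_le_sum_of_subset_of_nonneg (Finset.filter_subset _ _) ?_
          intro n _ _
          positivity
    _ ≤ (J:ℝ) * K * (1 + Real.log ⌊x⌋₊) :=
          mul_le_mul_of_nonneg_left (stmt15_harm ⌊x⌋₊) (by positivity)
    _ ≤ (4 * Real.log x) * K * (2 * Real.log x) := by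
          have hfl : Real.log (⌊x⌋₊ : ℝ) ≤ Real.log x := by
            rcases Nat.eq_zero_or_pos ⌊x⌋₊ with h0 | h0
            · rw [h0]; simpa using hl0.le
            · exact Real.log_le_log (by exact_mod_cast h0) (Nat.floor_le hx0.le)
          have h1 : 1 + Real.log (⌊x⌋₊ : ℝ) ≤ 2 * Real.log x := by linarith
          have h2 : (0:ℝ) ≤ 1 + Real.log (⌊x⌋₊ : ℝ) := by
            rcases Nat.eq_zero_or_pos ⌊x⌋₊ with h0 | h0
            · rw [h0]; norm_num
            · have : (0:ℝ) ≤ Real.log (⌊x⌋₊ : ℝ) :=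
                Real.log_natCast_nonneg _
              linarith
          calc (J:ℝ) * K * (1 + Real.log ⌊x⌋₊)
              ≤ (4 * Real.log x) * K * (1 + Real.log ⌊x⌋₊) := by
                exact mul_le_mul_of_nonneg_right
                  (mul_le_mul_of_nonneg_right hJle hK0) h2
          _ ≤ (4 * Real.log x) * K * (2 * Real.log x) :=
                mul_le_mul_of_nonneg_left h1 (by positivity)
    _ = 64 / d * (x / x ^ (c/2)) * (Real.log x)^2 := by rw [hK]; ring
  refine hsum.trans ?_
  -- final arithmetic
  rw [le_div_iff₀ (Real.rpow_pos_of_pos hl0 _)]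
  have hpow : (Real.log x)^2 * (Real.log x) ^ (1 - r/2) ≤ (Real.log x)^(3:ℕ) := by
    rw [← Real.rpow_natCast (Real.log x) 2, ← Real.rpow_natCast (Real.log x) 3,
      ← Real.rpow_add hl0]
    exact Real.rpow_le_rpow_of_exponent_le hl1 (by push_cast; linarith)
  have hlog3 : (Real.log x)^(3:ℕ) ≤ x ^ ((1 - c - d)/2) := by
    calc (Real.log x)^(3:ℕ) ≤ (x ^ ((1 - c - d)/2/3))^(3:ℕ) :=
          pow_le_pow_left₀ hl0.le hle 3
    _ = x ^ ((1 - c - d)/2/3 * 3) := by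
          rw [← Real.rpow_natCast (x ^ ((1 - c - d)/2/3)) 3, ← Real.rpow_mul hx0.le]
          norm_num
    _ = x ^ ((1 - c - d)/2) := by norm_num
  have hxs : x / x ^ (c/2) = x ^ (1 - c/2) := by
    rw [Real.rpow_sub hx0, Real.rpow_one]
  calc 64/d * (x / x ^ (c/2)) * (Real.log x)^2 * (Real.log x) ^ (1 - r/2)
      = 64/d * (x / x ^ (c/2)) * ((Real.log x)^2 * (Real.log x) ^ (1 - r/2)) := by ring
  _ ≤ 64/d * (x / x ^ (c/2)) * (x ^ ((1 - c - d)/2)) := by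
      have h0 : (0:ℝ) ≤ 64/d * (x / x ^ (c/2)) := by positivity
      exact mul_le_mul_of_nonneg_left (hpow.trans hlog3) h0
  _ = 64/d * (x ^ (1 - c/2) * x ^ ((1 - c - d)/2)) := by rw [hxs]; ring
  _ = 64/d * x ^ (1 - c + (1 - d)/2) := by
      rw [← Real.rpow_add hx0]
      congr 2
      ring
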